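/- Let P, Q be 2-dimensional subspaces of R^4 represented by pairs of purely imaginary unit quaternions ±(ℓ,r) and ±(ℓ',r'). Let φ, ψ ∈ [0,π] be the angles between ℓ,ℓ' and r,r' respectively, adjusted by (φ,ψ) ↦ (π−φ, π−ψ) if φ+ψ > π so that φ+ψ ≤ π and φ ≤ ψ. Then the principal angles between P and Q are (ψ±φ)/2, and d_c²(P,Q) = 1 − cos ψ cos φ. -/

import Mathlib

open Quaternion Real
open scoped RealInnerProductSpace

noncomputable section

namespace PrincipalAux

open Complex (I)
open ComplexConjugate

def QC (z w : ℂ) : ℍ[ℝ] := ⟨z.re, z.im, w.re, w.im⟩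

@[simp] lemma QC_re (z w : ℂ) : (QC z w).re = z.re := rfl
@[simp] lemma QC_imI (z w : ℂ) : (QC z w).imI = z.im := rfl
@[simp] lemma QC_imJ (z w : ℂ) : (QC z w).imJ = w.re := rfl
@[simp] lemma QC_imK (z w : ℂ) : (QC z w).imK = w.im := rfl

def Zp (g : ℍ[ℝ]) : ℂ := ⟨g.re, g.imI⟩
def Wp (g : ℍ[ℝ]) : ℂ := ⟨g.imJ, g.imK⟩

@[simp] lemma Zp_re (g : ℍ[ℝ]) : (Zp g).re = g.re := rfl
@[simp] lemma Zp_im (g : ℍ[ℝ]) : (Zp g).im = g.imI := rfl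
@[simp] lemma Wp_re (g : ℍ[ℝ]) : (Wp g).re = g.imJ := rfl
@[simp] lemma Wp_im (g : ℍ[ℝ]) : (Wp g).im = g.imK := rfl

lemma QC_eta (g : ℍ[ℝ]) : QC (Zp g) (Wp g) = g := by ext <;> simp

lemma QC_mul (z₁ w₁ z₂ w₂ : ℂ) :
    QC z₁ w₁ * QC z₂ w₂
      = QC (z₁ * z₂ - w₁ * conj w₂) (z₁ * w₂ + w₁ * conj z₂) := by
  ext <;>
    simp [Quaternion.re_mul, Quaternion.imI_mul, Quaternion.imJ_mul, Quaternion.imK_mul,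
      Complex.mul_re, Complex.mul_im] <;> ring

lemma QC_star (z w : ℂ) : star (QC z w) = QC (conj z) (-w) := by ext <;> simp

lemma re_cyc (x y : ℍ[ℝ]) : (x * y).re = (y * x).re := by
  simp [Quaternion.re_mul]; ring

@[simp] lemma Zp_QC (z w : ℂ) : Zp (QC z w) = z := by apply Complex.ext <;> simp
@[simp] lemma Wp_QC (z w : ℂ) : Wp (QC z w) = w := by apply Complex.ext <;> simp

/-- The fundamental Gram-entry formula. -/
lemma inner_formula (a b c d : ℍ[ℝ]) (p q : ℂ) :
    ⟪a * QC p 0 * star b, c * QC q 0 * star d⟫ =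
      (conj p * q * (Zp (star a * c) * conj (Zp (star b * d)))
        + conj p * conj q * (Wp (star a * c) * conj (Wp (star b * d)))).re := by
  rw [inner_def]
  rw [show (a * QC p 0 * star b) * star (c * QC q 0 * star d)
      = a * (QC p 0 * ((star b * d) * (QC (conj q) 0 * star c))) from by
    simp only [star_mul, star_star, QC_star, neg_zero, mul_assoc]]
  rw [re_cyc]
  rw [show (QC p 0 * ((star b * d) * (QC (conj q) 0 * star c))) * a
      = QC p 0 * (star b * d) * QC (conj q) 0 * (star c * a) from by
    simp only [mul_assoc]]
  rw [show star c * a = star (star a * c) from by rw [star_mul, star_star]]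
  rw [show star b * d = QC (Zp (star b * d)) (Wp (star b * d)) from (QC_eta _).symm]
  rw [show star (star a * c) = QC (conj (Zp (star a * c))) (-(Wp (star a * c))) from by
    rw [← QC_star, QC_eta]]
  rw [QC_mul, QC_mul, QC_mul, QC_re]
  simp [Complex.mul_re, Complex.mul_im, Complex.add_re, Complex.add_im,
    Complex.sub_re, Complex.sub_im, Complex.conj_re, Complex.conj_im]
  ring

/-- The inner product of two conjugates of `i`. -/
lemma inner_conj_I (a c : ℍ[ℝ]) :
    ⟪a * QC I 0 * star a, c * QC I 0 * star c⟫ =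
      Complex.normSq (Zp (star a * c)) - Complex.normSq (Wp (star a * c)) := by
  rw [inner_def]
  rw [show (a * QC I 0 * star a) * star (c * QC I 0 * star c)
      = a * (QC I 0 * ((star a * c) * (QC (conj I) 0 * star c))) from by
    simp only [star_mul, star_star, QC_star, neg_zero, mul_assoc]]
  rw [re_cyc]
  rw [show (QC I 0 * ((star a * c) * (QC (conj I) 0 * star c))) * a
      = QC I 0 * (star a * c) * QC (conj I) 0 * (star c * a) from by
    simp only [mul_assoc]]
  rw [show star c * a = star (star a * c) from by rw [star_mul, star_star]]
  generalize star a * c = γ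
  obtain ⟨z, w, rfl⟩ : ∃ z w, γ = QC z w := ⟨Zp γ, Wp γ, (QC_eta γ).symm⟩
  rw [QC_star, QC_mul, QC_mul, QC_mul, QC_re, Zp_QC, Wp_QC]
  simp [Complex.mul_re, Complex.mul_im, Complex.add_re, Complex.add_im,
    Complex.sub_re, Complex.sub_im, Complex.normSq_apply,
    Complex.I_re, Complex.I_im]
  ring

lemma normSq_split (g : ℍ[ℝ]) :
    normSq g = Complex.normSq (Zp g) + Complex.normSq (Wp g) := by
  rw [normSq_def']
  simp [Complex.normSq_apply]; ring

lemma norm_eq_of_normSq {x : ℍ[ℝ]} {c : ℝ} (hc : 0 ≤ c) (h : normSq x = c * c) :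
    ‖x‖ = c := by
  rw [← Real.sqrt_mul_self (norm_nonneg x), ← normSq_eq_norm_mul_self, h,
    Real.sqrt_mul_self hc]

def Complex.abs : AbsoluteValue ℂ ℝ where
  toFun := fun z => ‖z‖
  map_mul' := norm_mul
  nonneg' := norm_nonneg
  eq_zero' := fun _ => norm_eq_zero
  add_le' := norm_add_le

lemma Complex.abs_apply (z : ℂ) : Complex.abs z = √(Complex.normSq z) := Complex.norm_def z
lemma Complex.norm_eq_abs (z : ℂ) : ‖z‖ = Complex.abs z := rfl
lemma Complex.abs_conj (z : ℂ) : Complex.abs (conj z) = Complex.abs z := Complex.norm_conj z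
lemma Complex.abs_I : Complex.abs I = 1 := Complex.norm_I
lemma Complex.abs_ofReal (x : ℝ) : Complex.abs (x : ℂ) = |x| := Complex.norm_real x
lemma Complex.sq_abs (z : ℂ) : Complex.abs z ^ 2 = Complex.normSq z := Complex.sq_norm z

lemma abs_eq_of_normSq {z : ℂ} {c : ℝ} (hc : 0 ≤ c) (h : Complex.normSq z = c * c) :
    Complex.abs z = c := by
  rw [Complex.abs_apply, h, Real.sqrt_mul_self hc]

lemma mem_of_fix {l r : ℍ[ℝ]} {P : Submodule ℝ ℍ[ℝ]}
    (hP : ∀ x ∈ P, star l * x * r = x) (hP' : ∀ x ∈ Pᗮ, star l * x * r = -x)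
    {x : ℍ[ℝ]} (hx : star l * x * r = x) : x ∈ P := by
  obtain ⟨y, hy, z, hz, rfl⟩ := P.exists_add_mem_mem_orthogonal x
  have h1 : y + z = y + -z := by
    rw [← hx, mul_add, add_mul, hP y hy, hP' z hz]
  have h2 : z = 0 := by
    have h3 : z = -z := add_left_cancel h1
    have h4 : (2 : ℝ) • z = 0 := by
      rw [two_smul]
      rw [eq_neg_iff_add_eq_zero] at h3
      exact h3
    simpa using (smul_eq_zero.mp h4).resolve_left (by norm_num)
  rw [h2, add_zero]; exact hy

lemma cancel_left {a : ℍ[ℝ]} (h : star a * a = 1) (x : ℍ[ℝ]) : star a * (a * x) = x := by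
  rw [← mul_assoc, h, one_mul]

/-- The fixed-point computation. -/
lemma fix_comp {a b : ℍ[ℝ]} (ha : star a * a = 1) (hb : star b * b = 1) (p : ℂ) :
    star (a * QC I 0 * star a) * (a * QC p 0 * star b) * (b * QC I 0 * star b)
      = a * QC p 0 * star b := by
  have key : QC (conj I) 0 * (QC p 0 * QC I 0) = QC p 0 := by
    rw [QC_mul, QC_mul]
    congr 1 <;> simp [Complex.ext_iff, Complex.mul_re, Complex.mul_im] <;> ring
  calc star (a * QC I 0 * star a) * (a * QC p 0 * star b) * (b * QC I 0 * star b)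
      = a * (QC (conj I) 0 * (star a * (a * (QC p 0 * (star b * (b * (QC I 0 * star b))))))) := by
        simp only [star_mul, star_star, QC_star, neg_zero, mul_assoc]
    _ = a * (QC (conj I) 0 * (QC p 0 * (QC I 0 * star b))) := by
        rw [cancel_left ha, cancel_left hb]
    _ = a * QC p 0 * star b := by
        rw [show QC (conj I) 0 * (QC p 0 * (QC I 0 * star b))
            = (QC (conj I) 0 * (QC p 0 * QC I 0)) * star b from by simp only [mul_assoc],
          key, mul_assoc]

/-- Any purely imaginary unit quaternion is a conjugate of `i`. -/
lemma conj_exists {l : ℍ[ℝ]} (hl : l.re = 0) (hln : ‖l‖ = 1) :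
    ∃ a : ℍ[ℝ], ‖a‖ = 1 ∧ a * QC I 0 * star a = l := by
  have hns : normSq l = 1 := by rw [normSq_eq_norm_mul_self, hln]; norm_num
  have hstar : star l = -l := by ext <;> simp [hl]
  have hll : l * l = -1 := by
    have h := l.star_mul_self
    rw [hstar, hns, neg_mul] at h
    rw [← neg_neg (l * l), h]
    norm_num
  have hii : QC I 0 * QC I 0 = -1 := by
    ext <;> simp [Quaternion.re_mul, Quaternion.imI_mul, Quaternion.imJ_mul,
      Quaternion.imK_mul, Complex.I_re, Complex.I_im]
  by_cases hc : l = -(QC I 0)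
  · refine ⟨QC 0 1, ?_, ?_⟩
    · apply norm_eq_of_normSq (by norm_num)
      rw [normSq_def']; norm_num
    · rw [hc]; ext <;> simp [Quaternion.re_mul, Quaternion.imI_mul, Quaternion.imJ_mul,
        Quaternion.imK_mul, Complex.I_re, Complex.I_im]
  · set q : ℍ[ℝ] := 1 - l * QC I 0 with hq
    have hqne : q ≠ 0 := by
      intro h0
      have h1 : (1 : ℍ[ℝ]) = l * QC I 0 := by
        have := congrArg (fun t => t + l * QC I 0) h0
        simpa [hq] using this
      have h2 : l * (QC I 0 * QC I 0) = QC I 0 := by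
        rw [← mul_assoc, ← h1, one_mul]
      rw [hii] at h2
      apply hc
      have := congrArg (fun t => -t) h2
      simpa using this
    have hkey : q * QC I 0 = l * q := by
      rw [hq, sub_mul, one_mul, mul_assoc, hii, mul_sub, mul_one,
        ← mul_assoc l l (QC I 0), hll]
      simp only [mul_neg_one, sub_neg_eq_add, neg_one_mul]
      abel
    have hnq : ‖q‖ ≠ 0 := norm_ne_zero_iff.mpr hqne
    refine ⟨(‖q‖⁻¹ : ℝ) • q, ?_, ?_⟩
    · rw [norm_smul, Real.norm_eq_abs, abs_of_nonneg (by positivity), inv_mul_cancel₀ hnq]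
    · have hqq : q * star q = ((normSq q : ℝ) : ℍ[ℝ]) := q.self_mul_star
      simp only [Quaternion.star_smul, smul_mul_assoc, mul_smul_comm, smul_smul]
      rw [hkey, mul_assoc l q (star q), hqq, Quaternion.mul_coe_eq_smul, smul_smul]
      rw [show normSq q = ‖q‖ * ‖q‖ from normSq_eq_norm_mul_self q]
      rw [show ‖q‖⁻¹ * ‖q‖⁻¹ * (‖q‖ * ‖q‖) = 1 from by field_simp]
      rw [one_smul]

lemma rot_exists (X A : ℂ) (h : Complex.abs X = Complex.abs A) :
    ∃ c : ℂ, Complex.abs c = 1 ∧ c * X = A := by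
  by_cases hX : X = 0
  · refine ⟨1, by simp, ?_⟩
    have : Complex.abs A = 0 := by rw [← h, hX, map_zero]
    rw [hX, mul_zero, ((Complex.abs.eq_zero).mp this).symm]
  · refine ⟨A / X, ?_, div_mul_cancel₀ A hX⟩
    rw [map_div₀, ← h, div_self (Complex.abs.ne_zero hX)]

lemma abs_one_of_sq {p : ℂ} (h : Complex.abs (p ^ 2) = 1) : Complex.abs p = 1 := by
  rw [map_pow] at h
  nlinarith [Complex.abs.nonneg p]

lemma pair_exists (X Y A B : ℂ) (hA : Complex.abs X = Complex.abs A)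
    (hB : Complex.abs Y = Complex.abs B) :
    ∃ p q : ℂ, Complex.abs p = 1 ∧ Complex.abs q = 1 ∧
      (starRingEnd ℂ) p * q * X = A ∧ (starRingEnd ℂ) p * (starRingEnd ℂ) q * Y = B := by
  obtain ⟨c₁, hc₁, hc₁X⟩ := rot_exists X A hA
  obtain ⟨c₂, hc₂, hc₂Y⟩ := rot_exists Y B hB
  obtain ⟨p, hp⟩ := IsAlgClosed.exists_pow_nat_eq ((starRingEnd ℂ) c₁ * (starRingEnd ℂ) c₂)
    (n := 2) (by norm_num)
  have hpa : Complex.abs p = 1 := by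
    apply abs_one_of_sq
    rw [hp, map_mul, Complex.abs_conj, Complex.abs_conj, hc₁, hc₂, one_mul]
  have hpp : (starRingEnd ℂ) p * p = 1 := by
    rw [Complex.conj_mul', Complex.norm_eq_abs, hpa]; norm_num
  refine ⟨p, p * c₁, hpa, by rw [map_mul, hpa, hc₁, mul_one], ?_, ?_⟩
  · rw [show (starRingEnd ℂ) p * (p * c₁) = ((starRingEnd ℂ) p * p) * c₁ from by ring,
      hpp, one_mul, hc₁X]
  · have hcc : (starRingEnd ℂ) c₁ * c₁ = 1 := by
      rw [Complex.conj_mul', Complex.norm_eq_abs, hc₁]; norm_num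
    have : (starRingEnd ℂ) p * (starRingEnd ℂ) (p * c₁) = c₂ := by
      rw [map_mul, show (starRingEnd ℂ) p * ((starRingEnd ℂ) p * (starRingEnd ℂ) c₁)
          = (starRingEnd ℂ) p ^ 2 * (starRingEnd ℂ) c₁ from by ring, ← map_pow, hp]
      rw [map_mul, Complex.conj_conj, Complex.conj_conj]
      rw [show c₁ * c₂ * (starRingEnd ℂ) c₁ = ((starRingEnd ℂ) c₁ * c₁) * c₂ from by ring,
        hcc, one_mul]
    rw [this, hc₂Y]

/-- Key diagonalization lemma over ℂ. -/
lemma key_lemma (X Y : ℂ) (x y : ℝ) (hx : 0 ≤ x) (hy : 0 ≤ y)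
    (h : (Complex.abs X = x ∧ Complex.abs Y = y) ∨
         (Complex.abs X = y ∧ Complex.abs Y = x)) :
    ∃ p₁ p₂ q₁ q₂ : ℂ, Complex.abs p₁ = 1 ∧ Complex.abs p₂ = 1 ∧
      Complex.abs q₁ = 1 ∧ Complex.abs q₂ = 1 ∧
      ((starRingEnd ℂ) p₁ * p₂).re = 0 ∧ ((starRingEnd ℂ) q₁ * q₂).re = 0 ∧
      ((starRingEnd ℂ) p₁ * q₁ * X + (starRingEnd ℂ) p₁ * (starRingEnd ℂ) q₁ * Y).re = x - y ∧
      ((starRingEnd ℂ) p₂ * q₂ * X + (starRingEnd ℂ) p₂ * (starRingEnd ℂ) q₂ * Y).re = x + y ∧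
      ((starRingEnd ℂ) p₁ * q₂ * X + (starRingEnd ℂ) p₁ * (starRingEnd ℂ) q₂ * Y).re = 0 ∧
      ((starRingEnd ℂ) p₂ * q₁ * X + (starRingEnd ℂ) p₂ * (starRingEnd ℂ) q₁ * Y).re = 0 := by
  rcases h with ⟨hX, hY⟩ | ⟨hX, hY⟩
  · obtain ⟨p, q, hp, hq, hA, hB⟩ := pair_exists X Y (x : ℂ) (-(y : ℂ))
      (by rw [hX]; simp [Complex.abs_ofReal, abs_of_nonneg hx])
      (by rw [hY]; simp [Complex.abs_ofReal, abs_of_nonneg hy])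
    refine ⟨p, p * I, q, q * I, hp, by rw [map_mul, hp, Complex.abs_I, mul_one],
      hq, by rw [map_mul, hq, Complex.abs_I, mul_one], ?_, ?_, ?_, ?_, ?_, ?_⟩
    · simp [Complex.mul_re, Complex.mul_im]; ring
    · simp [Complex.mul_re, Complex.mul_im]; ring
    · rw [hA, hB]; simp; ring
    · have e : (starRingEnd ℂ) (p * I) * (q * I) * X
          + (starRingEnd ℂ) (p * I) * ((starRingEnd ℂ) (q * I)) * Y = (x : ℂ) + y := by
        simp only [map_mul, Complex.conj_I]
        rw [show (starRingEnd ℂ) p * -I * (q * I) * X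
            + (starRingEnd ℂ) p * -I * ((starRingEnd ℂ) q * -I) * Y
            = (-(I * I)) * ((starRingEnd ℂ) p * q * X)
              + (I * I) * ((starRingEnd ℂ) p * (starRingEnd ℂ) q * Y) from by ring,
          hA, hB, Complex.I_mul_I]
        ring
      rw [e]; simp
    · have e : (starRingEnd ℂ) p * (q * I) * X
          + (starRingEnd ℂ) p * ((starRingEnd ℂ) (q * I)) * Y = ((x : ℂ) + y) * I := by
        simp only [map_mul, Complex.conj_I]
        rw [show (starRingEnd ℂ) p * (q * I) * X
            + (starRingEnd ℂ) p * ((starRingEnd ℂ) q * -I) * Y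
            = I * ((starRingEnd ℂ) p * q * X)
              + (-I) * ((starRingEnd ℂ) p * (starRingEnd ℂ) q * Y) from by ring, hA, hB]
        ring
      rw [e]; simp
    · have e : (starRingEnd ℂ) (p * I) * q * X
          + (starRingEnd ℂ) (p * I) * ((starRingEnd ℂ) q) * Y = ((x : ℂ) - y) * -I := by
        simp only [map_mul, Complex.conj_I]
        rw [show (starRingEnd ℂ) p * -I * q * X
            + (starRingEnd ℂ) p * -I * ((starRingEnd ℂ) q) * Y
            = (-I) * ((starRingEnd ℂ) p * q * X)
              + (-I) * ((starRingEnd ℂ) p * (starRingEnd ℂ) q * Y) from by ring, hA, hB]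
        ring
      rw [e]; simp
  · obtain ⟨p, q, hp, hq, hA, hB⟩ := pair_exists X Y ((y : ℂ) * I) ((x : ℂ) * I)
      (by rw [hX, map_mul, Complex.abs_I, mul_one]; simp [Complex.abs_ofReal, abs_of_nonneg hy])
      (by rw [hY, map_mul, Complex.abs_I, mul_one]; simp [Complex.abs_ofReal, abs_of_nonneg hx])
    refine ⟨p, p * I, q * I, q, hp, by rw [map_mul, hp, Complex.abs_I, mul_one],
      by rw [map_mul, hq, Complex.abs_I, mul_one], hq, ?_, ?_, ?_, ?_, ?_, ?_⟩
    · simp [Complex.mul_re, Complex.mul_im]; ring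
    · simp only [map_mul, Complex.conj_I]
      simp [Complex.mul_re, Complex.mul_im]; ring
    · have e : (starRingEnd ℂ) p * (q * I) * X
          + (starRingEnd ℂ) p * ((starRingEnd ℂ) (q * I)) * Y = (x : ℂ) - y := by
        simp only [map_mul, Complex.conj_I]
        rw [show (starRingEnd ℂ) p * (q * I) * X
            + (starRingEnd ℂ) p * ((starRingEnd ℂ) q * -I) * Y
            = I * ((starRingEnd ℂ) p * q * X)
              + (-I) * ((starRingEnd ℂ) p * (starRingEnd ℂ) q * Y) from by ring,
          hA, hB]
        rw [show I * ((y : ℂ) * I) + -I * ((x : ℂ) * I) = (I * I) * ((y : ℂ) - x) from by ring,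
          Complex.I_mul_I]
        ring
      rw [e]; simp
    · have e : (starRingEnd ℂ) (p * I) * q * X
          + (starRingEnd ℂ) (p * I) * ((starRingEnd ℂ) q) * Y = (x : ℂ) + y := by
        simp only [map_mul, Complex.conj_I]
        rw [show (starRingEnd ℂ) p * -I * q * X
            + (starRingEnd ℂ) p * -I * ((starRingEnd ℂ) q) * Y
            = (-I) * ((starRingEnd ℂ) p * q * X)
              + (-I) * ((starRingEnd ℂ) p * (starRingEnd ℂ) q * Y) from by ring, hA, hB]
        rw [show -I * ((y : ℂ) * I) + -I * ((x : ℂ) * I) = (I * I) * (-(y : ℂ) - x) from by ring,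
          Complex.I_mul_I]
        ring
      rw [e]; simp
    · have e : (starRingEnd ℂ) p * q * X
          + (starRingEnd ℂ) p * ((starRingEnd ℂ) q) * Y = ((x : ℂ) + y) * I := by
        rw [hA, hB]; ring
      rw [e]; simp
    · have e : (starRingEnd ℂ) (p * I) * (q * I) * X
          + (starRingEnd ℂ) (p * I) * ((starRingEnd ℂ) (q * I)) * Y = ((y : ℂ) - x) * I := by
        simp only [map_mul, Complex.conj_I]
        rw [show (starRingEnd ℂ) p * -I * (q * I) * X
            + (starRingEnd ℂ) p * -I * ((starRingEnd ℂ) q * -I) * Y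
            = (-(I * I)) * ((starRingEnd ℂ) p * q * X)
              + (I * I) * ((starRingEnd ℂ) p * (starRingEnd ℂ) q * Y) from by ring,
          hA, hB, Complex.I_mul_I]
        ring
      rw [e]; simp

lemma abs_mul_conj {u v : ℂ} {c d : ℝ} (hc : 0 ≤ c) (hd : 0 ≤ d)
    (hu : Complex.normSq u = c * c) (hv : Complex.normSq v = d * d) :
    Complex.abs (u * (starRingEnd ℂ) v) = c * d := by
  rw [map_mul, Complex.abs_conj, abs_eq_of_normSq hc hu, abs_eq_of_normSq hd hv]

@[simp] lemma Zp_one : Zp 1 = 1 := by apply Complex.ext <;> simp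
@[simp] lemma Wp_one : Wp 1 = 0 := by apply Complex.ext <;> simp

lemma norm_unit_elt {a b : ℍ[ℝ]} {p : ℂ} (ha : ‖a‖ = 1) (hb : ‖b‖ = 1)
    (hp : Complex.abs p = 1) : ‖a * QC p 0 * star b‖ = 1 := by
  rw [norm_mul, norm_mul, norm_star, ha, hb, one_mul, mul_one]
  apply norm_eq_of_normSq (by norm_num)
  rw [normSq_split, Zp_QC, Wp_QC, map_zero, add_zero, ← Complex.sq_abs, hp]
  norm_num

lemma star_self_one {a : ℍ[ℝ]} (ha : ‖a‖ = 1) : star a * a = 1 := by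
  rw [Quaternion.star_mul_self, normSq_eq_norm_mul_self, ha, one_mul, Quaternion.coe_one]

lemma normSq_pair_one {a b : ℍ[ℝ]} (ha : ‖a‖ = 1) (hb : ‖b‖ = 1) :
    Complex.normSq (Zp (star a * b)) + Complex.normSq (Wp (star a * b)) = 1 := by
  rw [← normSq_split, normSq_eq_norm_mul_self, norm_mul, norm_star, ha, hb]
  norm_num

end PrincipalAux

set_option maxHeartbeats 1000000 in
open PrincipalAux in
/-- Let `P`, `Q` be 2-dimensional subspaces of `ℝ⁴ = ℍ` represented by pairs
`±(l,r)`, `±(l',r')` of purely imaginary unit quaternions (via the involutions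
`x ↦ l̄ x r` fixing the plane and negating its complement). Let `φ ≤ ψ` in `[0,π]`
with `φ + ψ ≤ π` be the angles between `l,l'` and `r,r'`, adjusted by
`(φ,ψ) ↦ (π-φ, π-ψ)` (i.e. negating both cosines) if necessary. Then the principal
angles between `P` and `Q` are `(ψ±φ)/2` — there are orthonormal principal bases
`u₁,u₂` of `P` and `v₁,v₂` of `Q` with `⟪uₐ,v_b⟫` the diagonal matrix of their
cosines — and `d_c²(P,Q) = 1 - cos ψ · cos φ`. -/
theorem principal_angles_from_quaternions
    (l r l' r' : ℍ[ℝ])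
    (hl : l.re = 0) (hr : r.re = 0) (hl' : l'.re = 0) (hr' : r'.re = 0)
    (hln : ‖l‖ = 1) (hrn : ‖r‖ = 1) (hl'n : ‖l'‖ = 1) (hr'n : ‖r'‖ = 1)
    (P Q : Submodule ℝ ℍ[ℝ])
    (hPdim : Module.finrank ℝ P = 2) (hQdim : Module.finrank ℝ Q = 2)
    (hP : ∀ x ∈ P, star l * x * r = x) (hP' : ∀ x ∈ Pᗮ, star l * x * r = -x)
    (hQ : ∀ x ∈ Q, star l' * x * r' = x) (hQ' : ∀ x ∈ Qᗮ, star l' * x * r' = -x)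
    (φ ψ : ℝ) (hφ0 : 0 ≤ φ) (hφψ : φ ≤ ψ) (hψπ : ψ ≤ π) (hsum : φ + ψ ≤ π)
    (hangles :
      (Real.cos φ = ⟪l, l'⟫ ∧ Real.cos ψ = ⟪r, r'⟫) ∨
      (Real.cos φ = -⟪l, l'⟫ ∧ Real.cos ψ = -⟪r, r'⟫) ∨
      (Real.cos ψ = ⟪l, l'⟫ ∧ Real.cos φ = ⟪r, r'⟫) ∨
      (Real.cos ψ = -⟪l, l'⟫ ∧ Real.cos φ = -⟪r, r'⟫)) :
    (∃ u₁ u₂ v₁ v₂ : ℍ[ℝ],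
      u₁ ∈ P ∧ u₂ ∈ P ∧ v₁ ∈ Q ∧ v₂ ∈ Q ∧
      ‖u₁‖ = 1 ∧ ‖u₂‖ = 1 ∧ ‖v₁‖ = 1 ∧ ‖v₂‖ = 1 ∧
      ⟪u₁, u₂⟫ = 0 ∧ ⟪v₁, v₂⟫ = 0 ∧
      ⟪u₁, v₁⟫ = Real.cos ((ψ + φ) / 2) ∧
      ⟪u₂, v₂⟫ = Real.cos ((ψ - φ) / 2) ∧
      ⟪u₁, v₂⟫ = 0 ∧ ⟪u₂, v₁⟫ = 0) ∧
    Real.sin ((ψ + φ) / 2) ^ 2 + Real.sin ((ψ - φ) / 2) ^ 2 =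
      1 - Real.cos ψ * Real.cos φ := by
  constructor
  · obtain ⟨a, ha, hal⟩ := conj_exists hl hln
    obtain ⟨b, hb, hbr⟩ := conj_exists hr hrn
    obtain ⟨a2, ha2, hal'⟩ := conj_exists hl' hl'n
    obtain ⟨b2, hb2, hbr'⟩ := conj_exists hr' hr'n
    have haa := star_self_one ha
    have hbb := star_self_one hb
    have haa2 := star_self_one ha2
    have hbb2 := star_self_one hb2
    have hφπ : φ ≤ π := le_trans hφψ hψπ
    have hψ0 : 0 ≤ ψ := le_trans hφ0 hφψ
    have hpi := Real.pi_pos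
    have hcφ0 : 0 ≤ Real.cos (φ / 2) :=
      Real.cos_nonneg_of_mem_Icc ⟨by linarith, by linarith⟩
    have hcψ0 : 0 ≤ Real.cos (ψ / 2) :=
      Real.cos_nonneg_of_mem_Icc ⟨by linarith, by linarith⟩
    have hsφ0 : 0 ≤ Real.sin (φ / 2) :=
      Real.sin_nonneg_of_nonneg_of_le_pi (by linarith) (by linarith)
    have hsψ0 : 0 ≤ Real.sin (ψ / 2) :=
      Real.sin_nonneg_of_nonneg_of_le_pi (by linarith) (by linarith)
    have hcφsq : Real.cos (φ / 2) * Real.cos (φ / 2) = 1 / 2 + Real.cos φ / 2 := by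
      have h := Real.cos_sq (φ / 2)
      rw [show 2 * (φ / 2) = φ from by ring, pow_two] at h
      exact h
    have hcψsq : Real.cos (ψ / 2) * Real.cos (ψ / 2) = 1 / 2 + Real.cos ψ / 2 := by
      have h := Real.cos_sq (ψ / 2)
      rw [show 2 * (ψ / 2) = ψ from by ring, pow_two] at h
      exact h
    have hsφsq : Real.sin (φ / 2) * Real.sin (φ / 2) = 1 / 2 - Real.cos φ / 2 := by
      have h := Real.sin_sq (φ / 2)
      rw [Real.cos_sq, show 2 * (φ / 2) = φ from by ring, pow_two] at h
      rw [h]; ring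
    have hsψsq : Real.sin (ψ / 2) * Real.sin (ψ / 2) = 1 / 2 - Real.cos ψ / 2 := by
      have h := Real.sin_sq (ψ / 2)
      rw [Real.cos_sq, show 2 * (ψ / 2) = ψ from by ring, pow_two] at h
      rw [h]; ring
    have hll2 : ⟪l, l'⟫ = Complex.normSq (Zp (star a * a2)) - Complex.normSq (Wp (star a * a2)) := by
      rw [← hal, ← hal']; exact inner_conj_I a a2
    have hrr2 : ⟪r, r'⟫ = Complex.normSq (Zp (star b * b2)) - Complex.normSq (Wp (star b * b2)) := by
      rw [← hbr, ← hbr']; exact inner_conj_I b b2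
    have hA1 := normSq_pair_one ha ha2
    have hB1 := normSq_pair_one hb hb2
    have habs :
        (Complex.abs (Zp (star a * a2) * (starRingEnd ℂ) (Zp (star b * b2)))
            = Real.cos (φ / 2) * Real.cos (ψ / 2) ∧
          Complex.abs (Wp (star a * a2) * (starRingEnd ℂ) (Wp (star b * b2)))
            = Real.sin (φ / 2) * Real.sin (ψ / 2)) ∨
        (Complex.abs (Zp (star a * a2) * (starRingEnd ℂ) (Zp (star b * b2)))
            = Real.sin (φ / 2) * Real.sin (ψ / 2) ∧
          Complex.abs (Wp (star a * a2) * (starRingEnd ℂ) (Wp (star b * b2)))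
            = Real.cos (φ / 2) * Real.cos (ψ / 2)) := by
      have c1 : Complex.normSq (Zp (star a * a2)) + Complex.normSq (Wp (star a * a2)) = 1 := hA1
      have c2 : Complex.normSq (Zp (star b * b2)) + Complex.normSq (Wp (star b * b2)) = 1 := hB1
      rcases hangles with ⟨h1, h2⟩ | ⟨h1, h2⟩ | ⟨h1, h2⟩ | ⟨h1, h2⟩
      · left
        have e1 := abs_mul_conj (u := Zp (star a * a2)) (v := Zp (star b * b2))
          hcφ0 hcψ0 (by linarith) (by linarith)
        have e2 := abs_mul_conj (u := Wp (star a * a2)) (v := Wp (star b * b2))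
          hsφ0 hsψ0 (by linarith) (by linarith)
        exact ⟨e1, e2⟩
      · right
        have e1 := abs_mul_conj (u := Zp (star a * a2)) (v := Zp (star b * b2))
          hsφ0 hsψ0 (by linarith) (by linarith)
        have e2 := abs_mul_conj (u := Wp (star a * a2)) (v := Wp (star b * b2))
          hcφ0 hcψ0 (by linarith) (by linarith)
        exact ⟨e1, e2⟩
      · left
        have e1 := abs_mul_conj (u := Zp (star a * a2)) (v := Zp (star b * b2))
          hcψ0 hcφ0 (by linarith) (by linarith)
        have e2 := abs_mul_conj (u := Wp (star a * a2)) (v := Wp (star b * b2))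
          hsψ0 hsφ0 (by linarith) (by linarith)
        rw [e1, e2]
        constructor <;> ring
      · right
        have e1 := abs_mul_conj (u := Zp (star a * a2)) (v := Zp (star b * b2))
          hsψ0 hsφ0 (by linarith) (by linarith)
        have e2 := abs_mul_conj (u := Wp (star a * a2)) (v := Wp (star b * b2))
          hcψ0 hcφ0 (by linarith) (by linarith)
        rw [e1, e2]
        constructor <;> ring
    obtain ⟨p₁, p₂, q₁, q₂, hp₁, hp₂, hq₁, hq₂, horthp, horthq, hg11, hg22, hg12, hg21⟩ :=
      key_lemma (Zp (star a * a2) * (starRingEnd ℂ) (Zp (star b * b2)))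
        (Wp (star a * a2) * (starRingEnd ℂ) (Wp (star b * b2)))
        (Real.cos (φ / 2) * Real.cos (ψ / 2)) (Real.sin (φ / 2) * Real.sin (ψ / 2))
        (mul_nonneg hcφ0 hcψ0) (mul_nonneg hsφ0 hsψ0) habs
    refine ⟨a * QC p₁ 0 * star b, a * QC p₂ 0 * star b,
      a2 * QC q₁ 0 * star b2, a2 * QC q₂ 0 * star b2,
      mem_of_fix hP hP' (by rw [← hal, ← hbr]; exact fix_comp haa hbb p₁),
      mem_of_fix hP hP' (by rw [← hal, ← hbr]; exact fix_comp haa hbb p₂),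
      mem_of_fix hQ hQ' (by rw [← hal', ← hbr']; exact fix_comp haa2 hbb2 q₁),
      mem_of_fix hQ hQ' (by rw [← hal', ← hbr']; exact fix_comp haa2 hbb2 q₂),
      norm_unit_elt ha hb hp₁, norm_unit_elt ha hb hp₂,
      norm_unit_elt ha2 hb2 hq₁, norm_unit_elt ha2 hb2 hq₂,
      ?_, ?_, ?_, ?_, ?_, ?_⟩
    · rw [inner_formula, haa, hbb]
      simpa using horthp
    · rw [inner_formula, haa2, hbb2]
      simpa using horthq
    · rw [inner_formula, hg11, show (ψ + φ) / 2 = ψ / 2 + φ / 2 from by ring, Real.cos_add]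
      ring
    · rw [inner_formula, hg22, show (ψ - φ) / 2 = ψ / 2 - φ / 2 from by ring, Real.cos_sub]
      ring
    · rw [inner_formula]; exact hg12
    · rw [inner_formula]; exact hg21
  · rw [Real.sin_sq, Real.sin_sq, Real.cos_sq, Real.cos_sq,
      show 2 * ((ψ + φ) / 2) = ψ + φ from by ring,
      show 2 * ((ψ - φ) / 2) = ψ - φ from by ring,
      Real.cos_add, Real.cos_sub]
    ring
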